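/- Let C ⊆ ℝⁿ be the probability simplex Δ = {x : x_i ≥ 0, Σ x_i = 1} and let y ∈ ℝⁿ. Then the Euclidean projection of y onto Δ exists, is unique, and has the form (proj_Δ y)_i = max(y_i − θ, 0) for some θ ∈ ℝ satisfying Σ_i max(y_i − θ, 0) = 1. -/

import Mathlib

open Finset

/-- Euclidean projection onto the probability simplex `Δ = {x : xᵢ ≥ 0, Σ xᵢ = 1}`:
the projection of any `y` exists, is unique, and has the soft-thresholding form
`(proj_Δ y)ᵢ = max(yᵢ − θ, 0)` for some `θ` with `Σᵢ max(yᵢ − θ, 0) = 1`. -/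
theorem stmt18 (n : ℕ) (hn : 0 < n) (y : EuclideanSpace ℝ (Fin n)) :
    ∃ p : EuclideanSpace ℝ (Fin n),
      ((∀ i, 0 ≤ p i) ∧ ∑ i, p i = 1)
      ∧ (∀ q : EuclideanSpace ℝ (Fin n),
          ((∀ i, 0 ≤ q i) ∧ ∑ i, q i = 1) → ‖y - p‖ ≤ ‖y - q‖)
      ∧ (∀ p' : EuclideanSpace ℝ (Fin n),
          ((∀ i, 0 ≤ p' i) ∧ ∑ i, p' i = 1) →
          (∀ q : EuclideanSpace ℝ (Fin n),
            ((∀ i, 0 ≤ q i) ∧ ∑ i, q i = 1) → ‖y - p'‖ ≤ ‖y - q‖) → p' = p)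
      ∧ ∃ θ : ℝ, (∀ i, p i = max (y i - θ) 0) ∧ ∑ i, max (y i - θ) 0 = 1 := by
    classical
  haveI : Nonempty (Fin n) := Fin.pos_iff_nonempty.mp hn
  have hne : (Finset.univ : Finset (Fin n)).Nonempty := univ_nonempty
  set a := univ.inf' hne (fun i => y i) with ha
  set b := univ.sup' hne (fun i => y i) with hb
  set f : ℝ → ℝ := fun t => ∑ i, max (y i - t) 0 with hf
  have hcont : Continuous f := by
    apply continuous_finset_sum
    intro i _
    exact ((continuous_const.sub continuous_id).max continuous_const)
  have hab : a - 1 ≤ b := by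
    have : a ≤ b := le_trans (inf'_le _ (mem_univ (Classical.arbitrary _)))
      (le_sup' _ (mem_univ (Classical.arbitrary _)))
    linarith
  have hfa : (1:ℝ) ≤ f (a - 1) := by
    have hle : ∀ i ∈ univ, (1:ℝ) ≤ max (y i - (a-1)) 0 := by
      intro i _
      have : a ≤ y i := inf'_le _ (mem_univ i)
      have h1 : (1:ℝ) ≤ y i - (a - 1) := by linarith
      exact le_trans h1 (le_max_left _ _)
    calc (1:ℝ) ≤ (n:ℝ) := by exact_mod_cast hn
      _ = ∑ _i : Fin n, (1:ℝ) := by simp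
      _ ≤ f (a-1) := Finset.sum_le_sum hle
  have hfb : f b = 0 := by
    apply Finset.sum_eq_zero
    intro i _
    have : y i ≤ b := le_sup' _ (mem_univ i)
    simp [max_eq_right, sub_nonpos.mpr this]
  obtain ⟨θ, hθmem, hθ⟩ : ∃ θ ∈ Set.Icc (a-1) b, f θ = 1 := by
    have h2 := intermediate_value_Icc' hab hcont.continuousOn
    have h1 : (1:ℝ) ∈ Set.Icc (f b) (f (a-1)) := ⟨by rw [hfb]; norm_num, hfa⟩
    obtain ⟨θ, hθ1, hθ2⟩ := h2 h1
    exact ⟨θ, hθ1, hθ2⟩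
  set p : EuclideanSpace ℝ (Fin n) := WithLp.toLp 2 (fun i => max (y i - θ) 0) with hp
  have hpnn : ∀ i, 0 ≤ p i := fun i => le_max_right _ _
  have hpsum : ∑ i, p i = 1 := hθ
  have hkey : ∀ q : EuclideanSpace ℝ (Fin n), (∀ i, 0 ≤ q i) → ∑ i, q i = 1 →
      (inner ℝ (y - p) (q - p) : ℝ) ≤ 0 := by
    intro q hq hqs
    have hin : (inner ℝ (y - p) (q - p) : ℝ) = ∑ i, (y i - p i) * (q i - p i) := by
      simp [PiLp.inner_apply, PiLp.sub_apply, mul_comm]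
    rw [hin]
    have hterm : ∀ i ∈ univ, (y i - p i) * (q i - p i) ≤ θ * (q i - p i) := by
      intro i _
      rcases le_or_gt (y i - θ) 0 with h | h
      · have hpi : p i = 0 := max_eq_right h
        rw [hpi]
        have : y i ≤ θ := by linarith
        nlinarith [hq i]
      · have hpi : p i = y i - θ := max_eq_left h.le
        rw [hpi]
        ring_nf
        exact le_rfl
    calc ∑ i, (y i - p i) * (q i - p i) ≤ ∑ i, θ * (q i - p i) := Finset.sum_le_sum hterm
      _ = θ * (∑ i, q i - ∑ i, p i) := by rw [← Finset.sum_sub_distrib, Finset.mul_sum]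
      _ = 0 := by rw [hqs, hpsum]; ring
  have quant : ∀ q : EuclideanSpace ℝ (Fin n), (∀ i, 0 ≤ q i) → ∑ i, q i = 1 →
      ‖y - p‖^2 + ‖q - p‖^2 ≤ ‖y - q‖^2 := by
    intro q hq hqs
    have h1 : y - q = (y - p) - (q - p) := by abel
    have h2 : ‖(y - p) - (q - p)‖^2 = ‖y - p‖^2 - 2 * (inner ℝ (y-p) (q-p) : ℝ) + ‖q - p‖^2 :=
      norm_sub_sq_real _ _
    rw [h1, h2]
    have := hkey q hq hqs
    linarith
  have hmin : ∀ q : EuclideanSpace ℝ (Fin n),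
      ((∀ i, 0 ≤ q i) ∧ ∑ i, q i = 1) → ‖y - p‖ ≤ ‖y - q‖ := by
    intro q ⟨hq1, hq2⟩
    have h := quant q hq1 hq2
    have h2 : ‖y - p‖^2 ≤ ‖y - q‖^2 := by nlinarith [sq_nonneg ‖q - p‖]
    exact le_of_pow_le_pow_left₀ two_ne_zero (norm_nonneg _) h2
  refine ⟨p, ⟨hpnn, hpsum⟩, hmin, ?_, θ, fun i => rfl, hθ⟩
  intro p' ⟨hp1, hp2⟩ hp'min
  have heq : ‖y - p'‖ = ‖y - p‖ :=
    le_antisymm (hp'min p ⟨hpnn, hpsum⟩) (hmin p' ⟨hp1, hp2⟩)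
  have h := quant p' hp1 hp2
  have : ‖p' - p‖^2 ≤ 0 := by rw [heq] at h; nlinarith
  have h0 : ‖p' - p‖ ≤ 0 := by nlinarith [norm_nonneg (p' - p)]
  exact sub_eq_zero.mp (norm_eq_zero.mp (le_antisymm h0 (norm_nonneg _)))
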